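/- For every positive odd integer n and integer m with 1 ≤ m ≤ (n+1)/2: sum_{k=0}^{n-m} (q^{2m-1};q^2)_k / (q;q)_k * q^k ≡ (-1)^{(n-1)/2 + m - 1} * q^{(n^2-1)/4 - m^2 + m} (mod Phi_n(q)). -/

import Mathlib

open Finset Polynomial

/-- The q-Pochhammer symbol `(a; q)_n` in the field of rational functions. -/
noncomputable def qPoch (a q : RatFunc ℚ) (n : ℕ) : RatFunc ℚ :=
  ∏ j ∈ Finset.range n, (1 - a * q ^ j)

/-- `A ≡ B (mod Φ_n(q)^e)` in the localization of `ℚ[q]` at the n-th cyclotomic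
polynomial. -/
def CongrModCyclo (n e : ℕ) (A B : RatFunc ℚ) : Prop :=
  ∃ u v : Polynomial ℚ, ¬ (Polynomial.cyclotomic n ℚ ∣ v) ∧
    (A - B) * algebraMap (Polynomial ℚ) (RatFunc ℚ) v
      = algebraMap (Polynomial ℚ) (RatFunc ℚ) ((Polynomial.cyclotomic n ℚ) ^ e * u)

noncomputable def q : RatFunc ℚ := RatFunc.X



open Finset

section PartA
variable {F : Type*} [Field F]

/-- numerator product `∏_{j<k} (1 - z^{2(M-j)})` -/
def uu (z : F) (M k : ℕ) : F := ∏ j ∈ Finset.range k, (1 - z ^ (2 * (M - j)))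

/-- denominator product `(z;z)_k` -/
def dd (z : F) (k : ℕ) : F := ∏ j ∈ Finset.range k, (1 - z ^ (j + 1))

lemma dd_ne_zero (z : F) (k : ℕ) (hz : ∀ j, 1 ≤ j → j ≤ k → z ^ j ≠ 1) : dd z k ≠ 0 := by
  unfold dd
  refine Finset.prod_ne_zero_iff.mpr ?_
  intro j hj
  rw [Finset.mem_range] at hj
  rw [sub_ne_zero]
  exact fun h => hz (j + 1) (by omega) (by omega) h.symm

lemma dd_succ (z : F) (k : ℕ) : dd z (k + 1) = dd z k * (1 - z ^ (k + 1)) :=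
  Finset.prod_range_succ _ _

lemma uu_succ (z : F) (M k : ℕ) : uu z M (k + 1) = uu z M k * (1 - z ^ (2 * (M - k))) :=
  Finset.prod_range_succ _ _

lemma uu_shift (z : F) (N k : ℕ) :
    uu z (N + 1) (k + 1) = (1 - z ^ (2 * (N + 1))) * uu z N k := by
  unfold uu
  rw [Finset.prod_range_succ']
  simp only [Nat.succ_sub_succ_eq_sub, Nat.sub_zero]
  exact mul_comm _ _

lemma uu_top (z : F) (N : ℕ) : uu z N (N + 1) = 0 := by
  rw [uu_succ]
  simp

lemma partA (z : F) : ∀ M : ℕ, (∀ j, 1 ≤ j → j ≤ M → z ^ j ≠ 1) →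
    ((∑ k ∈ Finset.range (M + 1), (-1 : F) ^ k * z ^ ((M - k) ^ 2) * uu z M k / dd z k)
        = (-1) ^ M ∧
      (∑ k ∈ Finset.range (M + 1), (-1 : F) ^ k * z ^ ((M - k) ^ 2 + k) * uu z M k / dd z k)
        = (-1) ^ M * z ^ (2 * M)) := by
  intro M
  induction M with
  | zero => intro _; constructor <;> simp [uu, dd]
  | succ N ih =>
    intro hz
    have hzN : ∀ j, 1 ≤ j → j ≤ N → z ^ j ≠ 1 := fun j h1 h2 => hz j h1 (by omega)
    obtain ⟨IH1, IH2⟩ := ih hzN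
    have hdk : ∀ k, k ≤ N → dd z k ≠ 0 := fun k hk =>
      dd_ne_zero z k (fun j h1 h2 => hz j h1 (by omega))
    have hone : ∀ k, k ≤ N → (1 : F) - z ^ (k + 1) ≠ 0 := fun k hk => by
      rw [sub_ne_zero]; exact fun h => hz (k + 1) (by omega) (by omega) h.symm
    -- the "b" auxiliary sums
    -- b j  := (-1)^j * z^((N+1-j)^2 + 2*j) * uu z N j / dd z j
    -- b' j := (-1)^j * z^((N+1-j)^2 + j) * uu z N j / dd z j
    have hbsum : (∑ j ∈ Finset.range (N + 1),
        (-1 : F) ^ j * z ^ ((N + 1 - j) ^ 2 + 2 * j) * uu z N j / dd z j)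
        = z ^ (2 * N + 1) * ∑ j ∈ Finset.range (N + 1),
            (-1 : F) ^ j * z ^ ((N - j) ^ 2) * uu z N j / dd z j := by
      rw [Finset.mul_sum]
      refine Finset.sum_congr rfl fun j hj => ?_
      rw [Finset.mem_range] at hj
      obtain ⟨a, ha⟩ : ∃ a, N = a + j := ⟨N - j, by omega⟩
      subst ha
      have h1 : a + j + 1 - j = a + 1 := by omega
      have h2 : a + j - j = a := by omega
      rw [h1, h2]
      have h3 : (a + 1) ^ 2 + 2 * j = (2 * (a + j) + 1) + a ^ 2 := by ring
      rw [h3, pow_add]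
      ring
    have hb'sum : (∑ j ∈ Finset.range (N + 1),
        (-1 : F) ^ j * z ^ ((N + 1 - j) ^ 2 + j) * uu z N j / dd z j)
        = z ^ (N + 1) * ∑ j ∈ Finset.range (N + 1),
            (-1 : F) ^ j * z ^ ((N - j) ^ 2 + (N - j)) * uu z N j / dd z j := by
      rw [Finset.mul_sum]
      refine Finset.sum_congr rfl fun j hj => ?_
      rw [Finset.mem_range] at hj
      obtain ⟨a, ha⟩ : ∃ a, N = a + j := ⟨N - j, by omega⟩
      subst ha
      have h1 : a + j + 1 - j = a + 1 := by omega
      have h2 : a + j - j = a := by omega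
      rw [h1, h2]
      have h3 : (a + 1) ^ 2 + j = (a + j + 1) + (a ^ 2 + a) := by ring
      rw [h3, pow_add]
      ring
    constructor
    · -- G recurrence
      have hterm : ∀ k ∈ Finset.range (N + 1),
          (-1 : F) ^ (k + 1) * z ^ ((N + 1 - (k + 1)) ^ 2) * uu z (N + 1) (k + 1)
              / dd z (k + 1)
          = (-((-1 : F) ^ k * z ^ ((N - k) ^ 2) * uu z N k / dd z k)
              - z * ((-1 : F) ^ k * z ^ ((N - k) ^ 2 + k) * uu z N k / dd z k))
            + (-1 : F) ^ (k + 1) * z ^ ((N + 1 - (k + 1)) ^ 2 + 2 * (k + 1)) * uu z N (k + 1)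
              / dd z (k + 1) := by
        intro k hk
        rw [Finset.mem_range] at hk
        have hk' : k ≤ N := by omega
        have e1 : N + 1 - (k + 1) = N - k := by omega
        rw [e1, uu_shift, uu_succ, dd_succ]
        have hzz : z ^ (2 * (N + 1)) = z ^ (k + 1) * z ^ (k + 1) * z ^ (2 * (N - k)) := by
          rw [← pow_add, ← pow_add]; congr 1; omega
        have h5 : z ^ ((N - k) ^ 2 + 2 * (k + 1))
            = z ^ ((N - k) ^ 2) * (z ^ (k + 1) * z ^ (k + 1)) := by
          rw [← pow_add, ← pow_add]; congr 1; omega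
        have h6 : z ^ ((N - k) ^ 2 + k) = z ^ ((N - k) ^ 2) * z ^ k := pow_add z _ _
        have h7 : z ^ (k + 1) = z ^ k * z := pow_succ z k
        rw [hzz, h5, h6, pow_succ ((-1 : F)) k]
        have hd := hdk k hk'
        have h1 := hone k hk'
        field_simp
        rw [h7]
        ring
      rw [Finset.sum_range_succ' _ (N + 1)]
      rw [Finset.sum_congr rfl hterm]
      simp only [Finset.sum_add_distrib, Finset.sum_sub_distrib, Finset.sum_neg_distrib,
        ← Finset.mul_sum]
      -- handle the shifted b-sum
      have hshift : (∑ k ∈ Finset.range (N + 1),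
          (-1 : F) ^ (k + 1) * z ^ ((N + 1 - (k + 1)) ^ 2 + 2 * (k + 1)) * uu z N (k + 1)
            / dd z (k + 1))
          = (∑ j ∈ Finset.range (N + 2),
              (-1 : F) ^ j * z ^ ((N + 1 - j) ^ 2 + 2 * j) * uu z N j / dd z j)
            - z ^ ((N + 1) ^ 2) := by
        rw [Finset.sum_range_succ' (fun j => (-1 : F) ^ j * z ^ ((N + 1 - j) ^ 2 + 2 * j)
            * uu z N j / dd z j) (N + 1)]
        simp [uu, dd]
      have hb2 : (∑ j ∈ Finset.range (N + 2),
          (-1 : F) ^ j * z ^ ((N + 1 - j) ^ 2 + 2 * j) * uu z N j / dd z j)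
          = ∑ j ∈ Finset.range (N + 1),
              (-1 : F) ^ j * z ^ ((N + 1 - j) ^ 2 + 2 * j) * uu z N j / dd z j := by
        rw [Finset.sum_range_succ, uu_top]; simp
      rw [hshift, hb2, hbsum, IH1, IH2]
      simp only [uu, dd, Finset.range_zero, Finset.prod_empty, Nat.sub_zero, pow_zero, one_mul,
        add_zero, div_one, mul_one]
      have h8 : z ^ (2 * N + 1) = z ^ (2 * N) * z := pow_succ z (2 * N)
      rw [pow_succ ((-1 : F)) N, h8]
      ring
    · -- H recurrence
      have hterm : ∀ k ∈ Finset.range (N + 1),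
          (-1 : F) ^ (k + 1) * z ^ ((N + 1 - (k + 1)) ^ 2 + (k + 1)) * uu z (N + 1) (k + 1)
              / dd z (k + 1)
          = (-(z ^ (N + 1) * ((-1 : F) ^ k * z ^ ((N - k) ^ 2 + (N - k)) * uu z N k / dd z k))
              - z ^ (2 * (N + 1)) * ((-1 : F) ^ k * z ^ ((N - k) ^ 2) * uu z N k / dd z k))
            + (-1 : F) ^ (k + 1) * z ^ ((N + 1 - (k + 1)) ^ 2 + (k + 1)) * uu z N (k + 1)
              / dd z (k + 1) := by
        intro k hk
        rw [Finset.mem_range] at hk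
        have hk' : k ≤ N := by omega
        have e1 : N + 1 - (k + 1) = N - k := by omega
        rw [e1, uu_shift, uu_succ, dd_succ]
        have h5 : z ^ ((N - k) ^ 2 + (k + 1))
            = z ^ ((N - k) ^ 2) * z ^ (k + 1) := pow_add z _ _
        have hw : z ^ ((N - k) ^ 2 + (N - k))
            = z ^ ((N - k) ^ 2) * z ^ (N - k) := pow_add z _ _
        have hzz : z ^ (2 * (N + 1)) = z ^ (k + 1) * z ^ (k + 1) * (z ^ (N - k) * z ^ (N - k)) := by
          rw [← pow_add, ← pow_add, ← pow_add]; congr 1; omega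
        have hN1 : z ^ (N + 1) = z ^ (k + 1) * z ^ (N - k) := by
          rw [← pow_add]; congr 1; omega
        have hy : z ^ (2 * (N - k)) = z ^ (N - k) * z ^ (N - k) := by
          rw [← pow_add]; congr 1; omega
        rw [h5, hw, hzz, hN1, hy, pow_succ ((-1 : F)) k]
        have hd := hdk k hk'
        have h1 := hone k hk'
        field_simp
        ring
      rw [Finset.sum_range_succ' _ (N + 1)]
      rw [Finset.sum_congr rfl hterm]
      simp only [Finset.sum_add_distrib, Finset.sum_sub_distrib, Finset.sum_neg_distrib,
        ← Finset.mul_sum]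
      have hshift : (∑ k ∈ Finset.range (N + 1),
          (-1 : F) ^ (k + 1) * z ^ ((N + 1 - (k + 1)) ^ 2 + (k + 1)) * uu z N (k + 1)
            / dd z (k + 1))
          = (∑ j ∈ Finset.range (N + 2),
              (-1 : F) ^ j * z ^ ((N + 1 - j) ^ 2 + j) * uu z N j / dd z j)
            - z ^ ((N + 1) ^ 2) := by
        rw [Finset.sum_range_succ' (fun j => (-1 : F) ^ j * z ^ ((N + 1 - j) ^ 2 + j)
            * uu z N j / dd z j) (N + 1)]
        simp [uu, dd]
      have hb2 : (∑ j ∈ Finset.range (N + 2),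
          (-1 : F) ^ j * z ^ ((N + 1 - j) ^ 2 + j) * uu z N j / dd z j)
          = ∑ j ∈ Finset.range (N + 1),
              (-1 : F) ^ j * z ^ ((N + 1 - j) ^ 2 + j) * uu z N j / dd z j := by
        rw [Finset.sum_range_succ, uu_top]; simp
      rw [hshift, hb2, hb'sum, IH1]
      simp only [uu, dd, Finset.range_zero, Finset.prod_empty, Nat.sub_zero, pow_zero, one_mul,
        add_zero, div_one, mul_one]
      rw [pow_succ ((-1 : F)) N]
      ring

end PartA

open Finset

section KeyC

lemma keyC (s m : ℕ) (hm1 : 1 ≤ m) (hm : m ≤ s + 1) (ζ : ℂ)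
    (hζ : IsPrimitiveRoot ζ (2 * s + 1)) :
    ∑ k ∈ range (2 * s + 1 - m + 1),
        (∏ j ∈ range k, (1 - ζ ^ (2 * m - 1 + 2 * j))) * ζ ^ k
          * (∏ j ∈ Ico k (2 * s + 1 - m), (1 - ζ ^ (j + 1)))
      = (-1) ^ (s + m - 1) * ζ ^ ((2 * s + 1) * (s + 1 - m) - (s + 1 - m) ^ 2)
          * ∏ j ∈ range (2 * s + 1 - m), (1 - ζ ^ (j + 1)) := by
  set n := 2 * s + 1 with hn
  set M := s + 1 - m with hM
  have hMn : M ≤ n - m := by omega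
  have hζn : ζ ^ n = 1 := hζ.pow_eq_one
  have hζ0 : ζ ≠ 0 := hζ.ne_zero (by omega)
  have hne : ∀ j, 1 ≤ j → j ≤ n - 1 → ζ ^ j ≠ 1 := fun j h1 h2 =>
    hζ.pow_ne_one_of_pos_of_lt (by omega) (by omega)
  -- restrict the sum to k ≤ M
  rw [← Finset.sum_subset (Finset.range_subset_range.mpr (show M + 1 ≤ n - m + 1 by omega))
    (fun k hk hk2 => by
      rw [Finset.mem_range] at hk hk2
      have hMk : M ∈ Finset.range k := Finset.mem_range.mpr (by omega)
      rw [Finset.prod_eq_zero hMk (by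
        have : 2 * m - 1 + 2 * M = n := by omega
        rw [this, hζn, sub_self]), zero_mul, zero_mul])]
  -- multiply both sides by ζ ^ (M ^ 2)
  have hpow : ζ ^ (M ^ 2) ≠ 0 := pow_ne_zero _ hζ0
  refine mul_left_cancel₀ hpow ?_
  rw [Finset.mul_sum]
  -- RHS simplification : ζ^(M^2) * ζ^(n*M - M^2) = 1
  have hM2nM : M ^ 2 ≤ n * M := by
    have := Nat.mul_le_mul_right M (show M ≤ n by omega)
    simpa [pow_two] using this
  have hrhs : ζ ^ (M ^ 2) * ζ ^ (n * M - M ^ 2) = 1 := by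
    rw [← pow_add]
    have : M ^ 2 + (n * M - M ^ 2) = n * M := by omega
    rw [this, pow_mul, hζn, one_pow]
  -- termwise rewriting
  have hterm : ∀ k ∈ Finset.range (M + 1),
      ζ ^ (M ^ 2) * ((∏ j ∈ range k, (1 - ζ ^ (2 * m - 1 + 2 * j))) * ζ ^ k
          * (∏ j ∈ Ico k (n - m), (1 - ζ ^ (j + 1))))
      = ((-1) ^ k * ζ ^ ((M - k) ^ 2) * uu ζ M k / dd ζ k)
          * ∏ j ∈ range (n - m), (1 - ζ ^ (j + 1)) := by
    intro k hk
    rw [Finset.mem_range] at hk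
    have hkM : k ≤ M := by omega
    -- the numerator product identity
    have hprod : (∏ j ∈ range k, (1 - ζ ^ (2 * m - 1 + 2 * j)))
        = (-1) ^ k * ζ ^ (k * (2 * m - 2 + k)) * uu ζ M k := by
      induction k with
      | zero => simp [uu]
      | succ l ihl =>
        have hlM : l ≤ M := by omega
        rw [Finset.prod_range_succ, ihl (by omega) (by omega), uu_succ]
        have hinv : ζ ^ (2 * m - 1 + 2 * l) * ζ ^ (2 * (M - l)) = 1 := by
          rw [← pow_add]
          have : 2 * m - 1 + 2 * l + 2 * (M - l) = n := by omega
          rw [this, hζn]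
        have hfac : (1 - ζ ^ (2 * m - 1 + 2 * l))
            = -ζ ^ (2 * m - 1 + 2 * l) * (1 - ζ ^ (2 * (M - l))) := by
          linear_combination -hinv
        rw [hfac]
        have he : l * (2 * m - 2 + l) + (2 * m - 1 + 2 * l)
            = (l + 1) * (2 * m - 2 + (l + 1)) := by
          obtain ⟨c, hc⟩ : ∃ c, m = c + 1 := ⟨m - 1, by omega⟩
          subst hc
          simp only [show 2 * (c + 1) - 1 = 2 * c + 1 from by omega,
            show 2 * (c + 1) - 2 = 2 * c from by omega]
          ring
        have hexp : ζ ^ (l * (2 * m - 2 + l)) * ζ ^ (2 * m - 1 + 2 * l)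
            = ζ ^ ((l + 1) * (2 * m - 2 + (l + 1))) := by
          rw [← pow_add, he]
        rw [pow_succ (-1 : ℂ) l]
        calc (-1 : ℂ) ^ l * ζ ^ (l * (2 * m - 2 + l)) * uu ζ M l
              * (-ζ ^ (2 * m - 1 + 2 * l) * (1 - ζ ^ (2 * (M - l))))
            = ((-1) ^ l * -1) * (ζ ^ (l * (2 * m - 2 + l)) * ζ ^ (2 * m - 1 + 2 * l))
              * (uu ζ M l * (1 - ζ ^ (2 * (M - l)))) := by ring
          _ = _ := by rw [hexp]
    rw [hprod]
    -- собрать степени : M^2 + k*(2m-2+k) + k = (M-k)^2 + n*k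
    have hexp2 : ζ ^ (M ^ 2) * ζ ^ (k * (2 * m - 2 + k)) * ζ ^ k
        = ζ ^ ((M - k) ^ 2) := by
      rw [← pow_add, ← pow_add]
      have : M ^ 2 + k * (2 * m - 2 + k) + k = (M - k) ^ 2 + n * k := by
        have hln : (n : ℤ) = 2 * (M : ℤ) + 2 * (m : ℤ) - 1 := by omega
        have hn2 : (n : ℤ) = 2 * (s : ℤ) + 1 := by omega
        zify [hkM, show 2 ≤ 2 * m from by omega]
        linear_combination (-(k : ℤ)) * hln
      rw [this, pow_add, pow_mul, hζn, one_pow, mul_one]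
    -- разложение D = dd * Ek
    have hD : (∏ j ∈ range (n - m), (1 - ζ ^ (j + 1)))
        = dd ζ k * ∏ j ∈ Ico k (n - m), (1 - ζ ^ (j + 1)) := by
      rw [dd]
      exact (Finset.prod_range_mul_prod_Ico _ (by omega)).symm
    have hdd : dd ζ k ≠ 0 := dd_ne_zero ζ k (fun j h1 h2 => hne j h1 (by omega))
    rw [hD, div_mul_eq_mul_div, eq_div_iff hdd, ← hexp2]
    ring
  rw [Finset.sum_congr rfl hterm, ← Finset.sum_mul]
  have hA := (partA ζ M (fun j h1 h2 => hne j h1 (by omega))).1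
  rw [hA]
  -- final : (-1)^M * D = ζ^{M²} * ((-1)^{s+m-1} * ζ^{nM-M²} * D)
  have hsign : ((-1 : ℂ)) ^ (s + m - 1) = (-1) ^ M := by
    have : s + m - 1 = M + 2 * (m - 1) := by omega
    rw [this, pow_add, pow_mul]
    norm_num
  rw [hsign]
  calc ((-1 : ℂ)) ^ M * ∏ j ∈ range (n - m), (1 - ζ ^ (j + 1))
      = (ζ ^ (M ^ 2) * ζ ^ (n * M - M ^ 2)) * ((-1) ^ M
          * ∏ j ∈ range (n - m), (1 - ζ ^ (j + 1))) := by rw [hrhs]; ring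
    _ = _ := by ring

end KeyC

open Finset Polynomial

noncomputable section PartB

/-- `(q^{2m-1}; q^2)_k` as a polynomial. -/
def Ppoly (m k : ℕ) : Polynomial ℚ :=
  ∏ j ∈ range k, (1 - Polynomial.X ^ (2 * m - 1 + 2 * j))

/-- `(q;q)_k` as a polynomial. -/
def Dpoly (k : ℕ) : Polynomial ℚ :=
  ∏ j ∈ range k, (1 - Polynomial.X ^ (j + 1))

/-- tail product. -/
def Ipoly (k b : ℕ) : Polynomial ℚ :=
  ∏ j ∈ Ico k b, (1 - Polynomial.X ^ (j + 1))

lemma one_sub_X_pow_ne_zero (j : ℕ) : (1 - Polynomial.X ^ (j + 1) : Polynomial ℚ) ≠ 0 := by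
  intro h
  have h2 := congrArg (Polynomial.eval 0) h
  simp [zero_pow] at h2

lemma Dpoly_ne_zero (k : ℕ) : Dpoly k ≠ 0 := by
  unfold Dpoly
  exact Finset.prod_ne_zero_iff.mpr fun j _ => one_sub_X_pow_ne_zero j

lemma Dpoly_split {k b : ℕ} (h : k ≤ b) : Dpoly b = Dpoly k * Ipoly k b := by
  unfold Dpoly Ipoly
  exact (Finset.prod_range_mul_prod_Ico _ h).symm

end PartB

open Finset Polynomial

lemma cyclo_dvd (s m : ℕ) (hm1 : 1 ≤ m) (hm : m ≤ s + 1) :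
    Polynomial.cyclotomic (2 * s + 1) ℚ ∣
      ((∑ k ∈ range (2 * s + 1 - m + 1),
          Ppoly m k * Polynomial.X ^ k * Ipoly k (2 * s + 1 - m))
        - (-1) ^ (s + m - 1)
            * Polynomial.X ^ ((2 * s + 1) * (s + 1 - m) - (s + 1 - m) ^ 2)
            * Dpoly (2 * s + 1 - m)) := by
  have hn0 : 0 < 2 * s + 1 := by omega
  obtain ⟨ζ, hζ⟩ : ∃ ζ : ℂ, IsPrimitiveRoot ζ (2 * s + 1) :=
    ⟨_, Complex.isPrimitiveRoot_exp _ (by omega)⟩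
  rw [cyclotomic_eq_minpoly_rat hζ hn0]
  apply minpoly.dvd
  simp only [Ppoly, Ipoly, Dpoly, map_sub, map_sum, map_mul, map_pow, map_prod, map_one,
    map_neg, Polynomial.aeval_X]
  rw [sub_eq_zero]
  exact keyC s m hm1 hm ζ hζ

lemma cyclo_not_dvd (s m : ℕ) (hm1 : 1 ≤ m) :
    ¬ Polynomial.cyclotomic (2 * s + 1) ℚ ∣ Dpoly (2 * s + 1 - m) := by
  intro hdvd
  obtain ⟨ζ, hζ⟩ : ∃ ζ : ℂ, IsPrimitiveRoot ζ (2 * s + 1) :=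
    ⟨_, Complex.isPrimitiveRoot_exp _ (by omega)⟩
  have hprime : Prime (Polynomial.cyclotomic (2 * s + 1) ℚ) :=
    (Polynomial.cyclotomic.irreducible_rat (by omega)).prime
  unfold Dpoly at hdvd
  obtain ⟨j, hj, hdj⟩ := hprime.exists_mem_finset_dvd hdvd
  rw [Finset.mem_range] at hj
  obtain ⟨c, hc⟩ := hdj
  have hΦ0 : Polynomial.aeval ζ (Polynomial.cyclotomic (2 * s + 1) ℚ) = 0 := by
    rw [Polynomial.aeval_def, ← Polynomial.eval_map, Polynomial.map_cyclotomic]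
    exact hζ.isRoot_cyclotomic (by omega)
  have h0 : Polynomial.aeval ζ (1 - Polynomial.X ^ (j + 1) : Polynomial ℚ) = 0 := by
    rw [hc, map_mul, hΦ0, zero_mul]
  simp only [map_sub, map_one, map_pow, Polynomial.aeval_X] at h0
  exact hζ.pow_ne_one_of_pos_of_lt (by omega) (by omega) (sub_eq_zero.mp h0).symm


theorem qcongruence_thm (n m : ℕ) (hn : Odd n) (hn0 : 0 < n)
    (hm1 : 1 ≤ m) (hm2 : m ≤ (n + 1) / 2) :
    CongrModCyclo n 1
      (∑ k ∈ range (n - m + 1),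
        qPoch (q ^ (2 * m - 1)) (q ^ 2) k / qPoch q q k * q ^ k)
      ((-1) ^ ((n - 1) / 2 + m - 1)
        * q ^ ((((n : ℤ) ^ 2 - 1) / 4) - (m : ℤ) ^ 2 + (m : ℤ))) := by
  obtain ⟨s, hs⟩ := hn
  have hs' : n = 2 * s + 1 := by omega
  subst hs'
  have hm' : m ≤ s + 1 := by omega
  obtain ⟨u, hu⟩ := cyclo_dvd s m hm1 hm'
  refine ⟨u, Dpoly (2 * s + 1 - m), cyclo_not_dvd s m hm1, ?_⟩
  rw [pow_one, ← hu]
  rw [sub_mul, map_sub]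
  congr 1
  · -- sum part
    rw [Finset.sum_mul, map_sum]
    refine Finset.sum_congr rfl fun k hk => ?_
    rw [Finset.mem_range] at hk
    have hk' : k ≤ 2 * s + 1 - m := by omega
    have hsplit : Dpoly (2 * s + 1 - m) = Dpoly k * Ipoly k (2 * s + 1 - m) := Dpoly_split hk'
    have hDkne : algebraMap (Polynomial ℚ) (RatFunc ℚ) (Dpoly k) ≠ 0 :=
      RatFunc.algebraMap_ne_zero (Dpoly_ne_zero k)
    have hP : qPoch (q ^ (2 * m - 1)) (q ^ 2) k
        = algebraMap (Polynomial ℚ) (RatFunc ℚ) (Ppoly m k) := by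
      unfold qPoch Ppoly
      rw [map_prod]
      refine Finset.prod_congr rfl fun j _ => ?_
      simp only [q, map_sub, map_one, map_pow, RatFunc.algebraMap_X]
      rw [← pow_mul, ← pow_add]
    have hD : qPoch q q k = algebraMap (Polynomial ℚ) (RatFunc ℚ) (Dpoly k) := by
      unfold qPoch Dpoly
      rw [map_prod]
      refine Finset.prod_congr rfl fun j _ => ?_
      simp only [q, map_sub, map_one, map_pow, RatFunc.algebraMap_X]
      rw [pow_succ]
      ring
    rw [hP, hD, hsplit, map_mul, map_mul, map_mul, map_pow, RatFunc.algebraMap_X]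
    simp only [q]
    field_simp
  · -- RHS part
    have he : (2 * s + 1 - 1) / 2 + m - 1 = s + m - 1 := by omega
    rw [he]
    have hle : (s + 1 - m) ^ 2 ≤ (2 * s + 1) * (s + 1 - m) := by
      rw [pow_two]
      exact Nat.mul_le_mul_right _ (by omega)
    have ht : ((((2 * s + 1 : ℕ) : ℤ) ^ 2 - 1) / 4 - (m : ℤ) ^ 2 + (m : ℤ))
        = (((2 * s + 1) * (s + 1 - m) - (s + 1 - m) ^ 2 : ℕ) : ℤ) := by
      have h4 : (((2 * s + 1 : ℕ) : ℤ) ^ 2 - 1) = 4 * ((s : ℤ) ^ 2 + s) := by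
        push_cast; ring
      rw [h4, Int.mul_ediv_cancel_left _ (by norm_num : (4 : ℤ) ≠ 0)]
      push_cast [hle, hm']
      ring
    rw [ht, zpow_natCast]
    simp only [q, map_mul, map_pow, map_neg, map_one, RatFunc.algebraMap_X]
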